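/- arXiv:2111.07401 — 2 statements merged into one kernel-verified Lean document; each statement's English description precedes it below -/
import Mathlib

section
/- (Donsker–Varadhan variational representation, Theorem 1 of the paper.) Let P and Q be probability measures on a measurable space X with P absolutely continuous with respect to Q and with finite Kullback–Leibler divergence D(P‖Q). Then D(P‖Q) equals the supremum, over all bounded measurable functions T : X → ℝ, of E_P[T] − log E_Q[exp(T)]. -/
open MeasureTheory Real

/-- The Kullback–Leibler divergence `D(P‖Q) = ∫ log (dP/dQ) dP`. -/
noncomputable def klDiv {X : Type*} [MeasurableSpace X] (P Q : Measure X) : ℝ :=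
  ∫ x, llr P Q x ∂P

/-- Nonnegativity of the KL divergence. -/
lemma integral_llr_nonneg_aux {X : Type*} [MeasurableSpace X] (P Q : Measure X)
    [IsProbabilityMeasure P] [IsProbabilityMeasure Q] (hPQ : P ≪ Q)
    (hfin : Integrable (llr P Q) P) : 0 ≤ ∫ x, llr P Q x ∂P := by
  have hg : Integrable (fun x ↦ (Q.rnDeriv P x).toReal) P :=
    Measure.integrable_toReal_rnDeriv
  have hcongr : (fun x ↦ Real.exp (- llr P Q x)) =ᵐ[P]
      fun x ↦ (Q.rnDeriv P x).toReal := exp_neg_llr hPQ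
  have hint : Integrable (fun x ↦ 1 - Real.exp (- llr P Q x)) P := by
    refine ((integrable_const (1 : ℝ)).sub (hg.congr hcongr.symm))
  have hle : ∀ x, 1 - Real.exp (- llr P Q x) ≤ llr P Q x := by
    intro x
    have := Real.add_one_le_exp (- llr P Q x)
    linarith
  have h1 : ∫ x, (1 - Real.exp (- llr P Q x)) ∂P ≤ ∫ x, llr P Q x ∂P :=
    integral_mono hint hfin hle
  have h2 : ∫ x, (1 - Real.exp (- llr P Q x)) ∂P
      = 1 - ∫ x, (Q.rnDeriv P x).toReal ∂P := by
    rw [integral_sub (integrable_const _) (hg.congr hcongr.symm)]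
    simp only [integral_const, measure_univ, ENNReal.toReal_one, smul_eq_mul, one_mul, probReal_univ]
    rw [integral_congr_ae hcongr]
  have h3 : ∫ x, (Q.rnDeriv P x).toReal ∂P ≤ 1 := by
    calc ∫ x, (Q.rnDeriv P x).toReal ∂P
        = ∫ x in Set.univ, (Q.rnDeriv P x).toReal ∂P := by rw [setIntegral_univ]
      _ ≤ (Q Set.univ).toReal := Measure.setIntegral_toReal_rnDeriv_le (measure_ne_top Q _)
      _ = 1 := by simp
  linarith

/-- Gibbs' inequality / one direction of Donsker–Varadhan. -/
lemma gibbs_aux {X : Type*} [MeasurableSpace X] (P Q : Measure X)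
    [IsProbabilityMeasure P] [IsProbabilityMeasure Q]
    (hPQ : P ≪ Q) (hfin : Integrable (llr P Q) P) (T : X → ℝ) (hT : Measurable T)
    (C : ℝ) (hC : ∀ x, |T x| ≤ C) :
    (∫ x, T x ∂P) - Real.log (∫ x, Real.exp (T x) ∂Q) ≤ klDiv P Q := by
  have hTP : Integrable T P :=
    Integrable.mono' (integrable_const C) hT.aestronglyMeasurable
      (Filter.Eventually.of_forall fun x ↦ by simpa [Real.norm_eq_abs] using hC x)
  have heT : Integrable (fun x ↦ Real.exp (T x)) Q := by
    refine Integrable.mono' (integrable_const (Real.exp C)) (hT.exp.aestronglyMeasurable) ?_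
    refine Filter.Eventually.of_forall fun x ↦ ?_
    rw [Real.norm_eq_abs, abs_of_pos (Real.exp_pos _)]
    exact Real.exp_le_exp.mpr ((abs_le.mp (hC x)).2)
  have hQ' : IsProbabilityMeasure (Q.tilted T) := isProbabilityMeasure_tilted heT
  have hPQ' : P ≪ Q.tilted T := hPQ.trans (absolutelyContinuous_tilted heT)
  have hint' : Integrable (llr P (Q.tilted T)) P :=
    integrable_llr_tilted_right hPQ hTP hfin heT
  have hkey := integral_llr_tilted_right hPQ hTP heT hfin
  have hnn : 0 ≤ ∫ x, llr P (Q.tilted T) x ∂P :=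
    integral_llr_nonneg_aux P (Q.tilted T) hPQ' hint'
  rw [hkey] at hnn
  unfold klDiv
  linarith

/-- **Donsker–Varadhan variational representation.** For probability measures `P ≪ Q` with
finite KL divergence, `D(P‖Q)` is the supremum over all bounded measurable `T : X → ℝ` of
`E_P[T] − log E_Q[exp T]`. -/
theorem donsker_varadhan_representation {X : Type*} [MeasurableSpace X]
    (P Q : Measure X) [IsProbabilityMeasure P] [IsProbabilityMeasure Q]
    (hPQ : P ≪ Q) (hfin : Integrable (llr P Q) P) :
    klDiv P Q = sSup {r : ℝ | ∃ T : X → ℝ, Measurable T ∧ (∃ C : ℝ, ∀ x, |T x| ≤ C) ∧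
      r = (∫ x, T x ∂P) - Real.log (∫ x, Real.exp (T x) ∂Q)} := by
  set S : Set ℝ := {r : ℝ | ∃ T : X → ℝ, Measurable T ∧ (∃ C : ℝ, ∀ x, |T x| ≤ C) ∧
      r = (∫ x, T x ∂P) - Real.log (∫ x, Real.exp (T x) ∂Q)} with hS
  have hub : ∀ r ∈ S, r ≤ klDiv P Q := by
    rintro r ⟨T, hT, ⟨C, hC⟩, rfl⟩
    exact gibbs_aux P Q hPQ hfin T hT C hC
  have hne : S.Nonempty := by
    refine ⟨0, fun _ ↦ 0, measurable_const, ⟨0, fun x ↦ by simp⟩, ?_⟩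
    simp
  have hbdd : BddAbove S := ⟨klDiv P Q, hub⟩
  refine le_antisymm ?_ (csSup_le hne hub)
  -- Lower bound: approximate `llr` by truncations.
  set rn : X → ENNReal := P.rnDeriv Q with hrn
  set T : ℕ → X → ℝ := fun n x ↦
    if rn x = 0 then (-(n : ℝ)) else max (min (llr P Q x) n) (-(n : ℝ)) with hTdef
  have hTmeas : ∀ n, Measurable (T n) := by
    intro n
    refine Measurable.ite ((Measure.measurable_rnDeriv P Q) (measurableSet_singleton 0))
      measurable_const ?_
    exact ((measurable_llr P Q).min measurable_const).max measurable_const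
  have hTbdd : ∀ n, ∀ x, |T n x| ≤ (n : ℝ) := by
    intro n x
    rw [abs_le]
    by_cases h0 : rn x = 0
    · simp [hTdef, h0]
    · simp only [hTdef, if_neg h0]
      constructor
      · exact le_max_right _ _
      · exact max_le ((min_le_right _ _)) (neg_le_self (Nat.cast_nonneg n))
  have hmem : ∀ n, (∫ x, T n x ∂P) - Real.log (∫ x, Real.exp (T n x) ∂Q) ∈ S :=
    fun n ↦ ⟨T n, hTmeas n, ⟨n, hTbdd n⟩, rfl⟩
  -- a.e. positivity of rn under P
  have hrnpos : ∀ᵐ x ∂P, 0 < rn x := Measure.rnDeriv_pos hPQ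
  -- Step 1: ∫ T n dP → ∫ llr dP
  have h1 : Filter.Tendsto (fun n ↦ ∫ x, T n x ∂P) Filter.atTop (nhds (klDiv P Q)) := by
    unfold klDiv
    refine tendsto_integral_of_dominated_convergence (fun x ↦ |llr P Q x|)
      (fun n ↦ (hTmeas n).aestronglyMeasurable) hfin.abs ?_ ?_
    · intro n
      filter_upwards [hrnpos] with x hx
      rw [Real.norm_eq_abs, hTdef]
      simp only [if_neg hx.ne']
      rcases le_or_gt 0 (llr P Q x) with h | h
      · rw [abs_of_nonneg h]
        have h1 : min (llr P Q x) n ≤ llr P Q x := min_le_left _ _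
        have h2 : (0:ℝ) ≤ min (llr P Q x) n := le_min h (Nat.cast_nonneg n)
        rw [abs_of_nonneg (le_trans h2 (le_max_left _ _))]
        exact max_le h1 (le_trans (neg_nonpos.mpr (Nat.cast_nonneg n)) h)
      · rw [abs_of_neg h]
        have h1 : min (llr P Q x) n = llr P Q x :=
          min_eq_left (le_trans h.le (Nat.cast_nonneg n))
        rw [h1]
        have h2 : max (llr P Q x) (-(n:ℝ)) ≤ 0 :=
          max_le h.le (neg_nonpos.mpr (Nat.cast_nonneg n))
        rw [abs_of_nonpos h2]
        simp only [neg_le_neg_iff]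
        exact le_max_left _ _
    · filter_upwards [hrnpos] with x hx
      refine Filter.Tendsto.congr' ?_ tendsto_const_nhds
      filter_upwards [Filter.eventually_ge_atTop (Nat.ceil (|llr P Q x|))] with n hn
      have hn' : |llr P Q x| ≤ (n : ℝ) :=
        (Nat.ceil_le.mp (le_refl _)).trans (Nat.cast_le.mpr hn) |>.trans_eq rfl
      rw [hTdef]
      simp only [if_neg hx.ne']
      rw [min_eq_left ((le_abs_self _).trans hn'),
        max_eq_left (le_trans (neg_le_neg hn') (neg_abs_le _))]
  -- Step 2: ∫ exp (T n) dQ → 1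
  have hrnint : Integrable (fun x ↦ (rn x).toReal) Q := Measure.integrable_toReal_rnDeriv
  have h2' : Filter.Tendsto (fun n ↦ ∫ x, Real.exp (T n x) ∂Q) Filter.atTop
      (nhds (∫ x, (rn x).toReal ∂Q)) := by
    refine tendsto_integral_of_dominated_convergence (fun x ↦ (rn x).toReal + 1)
      (fun n ↦ ((hTmeas n).exp).aestronglyMeasurable)
      (hrnint.add (integrable_const 1)) ?_ ?_
    · intro n
      filter_upwards [Measure.rnDeriv_lt_top P Q] with x hx
      rw [Real.norm_eq_abs, abs_of_pos (Real.exp_pos _)]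
      by_cases h0 : rn x = 0
      · simp only [hTdef, if_pos h0]
        have : Real.exp (-(n:ℝ)) ≤ 1 := Real.exp_le_one_iff.mpr (neg_nonpos.mpr (Nat.cast_nonneg n))
        have h1 : (0:ℝ) ≤ (rn x).toReal := ENNReal.toReal_nonneg
        linarith
      · simp only [hTdef, if_neg h0]
        have hpos : 0 < (rn x).toReal := ENNReal.toReal_pos h0 hx.ne
        have hle : max (min (llr P Q x) n) (-(n:ℝ)) ≤ max (llr P Q x) 0 :=
          max_le (le_trans (min_le_left _ _) (le_max_left _ _))
            (le_trans (neg_nonpos.mpr (Nat.cast_nonneg n)) (le_max_right _ _))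
        calc Real.exp (max (min (llr P Q x) n) (-(n:ℝ)))
            ≤ Real.exp (max (llr P Q x) 0) := Real.exp_le_exp.mpr hle
          _ = max (Real.exp (llr P Q x)) 1 := by
              rcases le_total (llr P Q x) 0 with h | h
              · rw [max_eq_right h, max_eq_right (Real.exp_le_one_iff.mpr h), Real.exp_zero]
              · rw [max_eq_left h, max_eq_left (Real.one_le_exp h)]
          _ ≤ (rn x).toReal + 1 := by
              have : Real.exp (llr P Q x) = (rn x).toReal := by
                rw [llr, Real.exp_log hpos]
              rw [this]
              rcases le_total ((rn x).toReal) 1 with h | h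
              · rw [max_eq_right h]; linarith
              · rw [max_eq_left h]; linarith
    · filter_upwards [Measure.rnDeriv_lt_top P Q] with x hx
      by_cases h0 : rn x = 0
      · simp only [hTdef, if_pos h0, h0, ENNReal.toReal_zero]
        have : Filter.Tendsto (fun n : ℕ ↦ -(n : ℝ)) Filter.atTop Filter.atBot := by
          exact Filter.tendsto_neg_atBot_iff.mpr tendsto_natCast_atTop_atTop
        exact Real.tendsto_exp_atBot.comp this
      · have hpos : 0 < (rn x).toReal := ENNReal.toReal_pos h0 hx.ne
        refine Filter.Tendsto.congr' ?_ tendsto_const_nhds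
        filter_upwards [Filter.eventually_ge_atTop (Nat.ceil (|llr P Q x|))] with n hn
        have hn' : |llr P Q x| ≤ (n : ℝ) :=
          (Nat.ceil_le.mp (le_refl _)).trans (Nat.cast_le.mpr hn)
        rw [hTdef]
        simp only [if_neg h0]
        rw [min_eq_left ((le_abs_self _).trans hn'),
          max_eq_left (le_trans (neg_le_neg hn') (neg_abs_le _)), llr, Real.exp_log hpos]
  have hint1 : ∫ x, (rn x).toReal ∂Q = 1 := by
    rw [hrn, Measure.integral_toReal_rnDeriv hPQ]
    simp
  rw [hint1] at h2'
  have h2 : Filter.Tendsto (fun n ↦ Real.log (∫ x, Real.exp (T n x) ∂Q)) Filter.atTop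
      (nhds 0) := by
    have := ((Real.continuousAt_log (one_ne_zero)).tendsto).comp h2'
    simpa [Function.comp_def] using this
  have hTend : Filter.Tendsto
      (fun n ↦ (∫ x, T n x ∂P) - Real.log (∫ x, Real.exp (T n x) ∂Q))
      Filter.atTop (nhds (klDiv P Q)) := by
    have := h1.sub h2
    simpa using this
  exact le_of_tendsto hTend (Filter.Eventually.of_forall fun n ↦ le_csSup hbdd (hmem n))
end

section
/- (Refined chi-square upper bound on KL divergence, Theorem 2 of the paper, from Sason–Verdú.) Let P and Q be probability measures on a measurable space X, mutually absolutely continuous, with finite chi-square divergences χ²(P‖Q) and χ²(Q‖P). Then D(P‖Q) ≤ log(1 + χ²(P‖Q)) − (3/2)·(χ²(P‖Q))² / ((1 + χ²(Q‖P))·(1 + χ²(P‖Q))² − 1), where D is measured in nats (natural logarithm), and the right-hand side is denoted χ²_UP(P‖Q). -/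
open MeasureTheory Real

private lemma log_ge_one_sub_inv {y : ℝ} (hy : 0 < y) : 1 - y⁻¹ ≤ Real.log y := by
  have h := Real.log_le_sub_one_of_pos (inv_pos.mpr hy)
  rw [Real.log_inv] at h; linarith

private lemma psi_deriv {y : ℝ} (hy : 0 < y) :
    HasDerivAt (fun y : ℝ => (y + 1) * Real.log y - 2 * (y - 1))
      (Real.log y + y⁻¹ - 1) y := by
  have h1 : HasDerivAt (fun y : ℝ => (y + 1) * Real.log y)
      (1 * Real.log y + (y + 1) * y⁻¹) y :=
    ((hasDerivAt_id y).add_const 1).mul (Real.hasDerivAt_log hy.ne')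
  have h2 : HasDerivAt (fun y : ℝ => 2 * (y - 1)) 2 y := by
    simpa using ((hasDerivAt_id y).sub_const 1).const_mul 2
  refine (h1.sub h2).congr_deriv ?_
  simp only [add_mul, mul_inv_cancel₀ hy.ne']
  ring

private lemma psi_mono :
    MonotoneOn (fun y : ℝ => (y + 1) * Real.log y - 2 * (y - 1)) (Set.Ioi 0) := by
  refine monotoneOn_of_deriv_nonneg (convex_Ioi 0)
    (fun x hx => (psi_deriv (Set.mem_Ioi.mp hx)).continuousAt.continuousWithinAt)
    (fun x hx => by
      rw [interior_Ioi] at hx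
      exact (psi_deriv (Set.mem_Ioi.mp hx)).differentiableAt.differentiableWithinAt)
    (fun x hx => ?_)
  rw [interior_Ioi] at hx
  have hx0 : (0:ℝ) < x := hx
  rw [(psi_deriv hx0).deriv]
  have := log_ge_one_sub_inv hx0
  linarith

private lemma F_deriv {y : ℝ} (hy : 0 < y) :
    HasDerivAt (fun y : ℝ => 2 * (y * (y + 2)) * Real.log y - (y - 1) * (5 * y + 1))
      (4 * ((y + 1) * Real.log y - 2 * (y - 1))) y := by
  have h1 : HasDerivAt (fun y : ℝ => 2 * (y * (y + 2))) (2 * (1 * (y + 2) + y * 1)) y :=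
    (((hasDerivAt_id y).mul ((hasDerivAt_id y).add_const 2))).const_mul 2
  have h2 : HasDerivAt (fun y : ℝ => 2 * (y * (y + 2)) * Real.log y)
      ((2 * (1 * (y + 2) + y * 1)) * Real.log y + 2 * (y * (y + 2)) * y⁻¹) y :=
    h1.mul (Real.hasDerivAt_log hy.ne')
  have h3 : HasDerivAt (fun y : ℝ => (y - 1) * (5 * y + 1))
      (1 * (5 * y + 1) + (y - 1) * 5) y := by
    have := ((hasDerivAt_id y).sub_const 1).mul
      (((hasDerivAt_id y).const_mul 5).add_const 1)
    exact this.congr_deriv (by simp only [id]; ring)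
  refine (h2.sub h3).congr_deriv ?_
  have e : y * y⁻¹ = 1 := mul_inv_cancel₀ hy.ne'
  have e2 : y * (y * y⁻¹) = y := by rw [e, mul_one]
  linarith [e, e2]

private lemma key_log {y : ℝ} (hy : 0 < y) :
    (y - 1) * (5 * y + 1) ≤ 2 * (y * (y + 2)) * Real.log y := by
  set F : ℝ → ℝ := fun y => 2 * (y * (y + 2)) * Real.log y - (y - 1) * (5 * y + 1) with hF
  have hF1 : F 1 = 0 := by simp [hF]
  have hpsi1 : ((1:ℝ) + 1) * Real.log 1 - 2 * (1 - 1) = 0 := by simp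
  rw [← sub_nonneg]
  show 0 ≤ F y
  rcases le_or_gt 1 y with h1 | h1
  · -- monotone on Ici 1
    have hmono : MonotoneOn F (Set.Ici 1) := by
      refine monotoneOn_of_deriv_nonneg (convex_Ici 1)
        (fun x hx => (F_deriv (lt_of_lt_of_le one_pos hx)).continuousAt.continuousWithinAt)
        (fun x hx => ?_) (fun x hx => ?_)
      · rw [interior_Ici] at hx
        exact (F_deriv (lt_trans one_pos hx)).differentiableAt.differentiableWithinAt
      · rw [interior_Ici] at hx
        have hx0 : (0:ℝ) < x := lt_trans one_pos hx
        rw [(F_deriv hx0).deriv]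
        have hpsi := psi_mono (Set.mem_Ioi.mpr one_pos) (Set.mem_Ioi.mpr hx0) hx.le
        simp only [Real.log_one] at hpsi
        linarith
    have := hmono (Set.mem_Ici.mpr le_rfl) (Set.mem_Ici.mpr h1) h1
    rw [hF1] at this; exact this
  · -- antitone on Ioc 0 1
    have hmono : AntitoneOn F (Set.Ioc 0 1) := by
      refine antitoneOn_of_deriv_nonpos (convex_Ioc 0 1)
        (fun x hx => (F_deriv hx.1).continuousAt.continuousWithinAt)
        (fun x hx => ?_) (fun x hx => ?_)
      · rw [interior_Ioc] at hx
        exact (F_deriv hx.1).differentiableAt.differentiableWithinAt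
      · rw [interior_Ioc] at hx
        rw [(F_deriv hx.1).deriv]
        have hpsi := psi_mono (Set.mem_Ioi.mpr hx.1) (Set.mem_Ioi.mpr one_pos) hx.2.le
        simp only [Real.log_one] at hpsi
        linarith
    have := hmono (Set.mem_Ioc.mpr ⟨hy, h1.le⟩) (Set.mem_Ioc.mpr ⟨one_pos, le_rfl⟩) h1.le
    rw [hF1] at this; exact this

private lemma key_pointwise {y : ℝ} (hy : 0 < y) :
    (y - 1) ^ 2 / (y * (y + 2)) ≤ 2 / 3 * (y⁻¹ - 1 + Real.log y) := by
  have hk := key_log hy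
  have hyy : y * y⁻¹ = 1 := mul_inv_cancel₀ hy.ne'
  rw [div_le_iff₀ (by positivity)]
  nlinarith [hk]

/-- The chi-square divergence `χ²(P‖Q) = ∫ (dP/dQ)² dQ − 1`. -/
noncomputable def chiSqDiv {X : Type*} [MeasurableSpace X] (P Q : Measure X) : ℝ :=
  (∫ x, ((P.rnDeriv Q x).toReal) ^ 2 ∂Q) - 1

/-- The refined chi-square upper bound `χ²_UP(P‖Q)`. -/
noncomputable def chiSqUP {X : Type*} [MeasurableSpace X] (P Q : Measure X) : ℝ :=
  Real.log (1 + chiSqDiv P Q) -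
    (3 / 2) * (chiSqDiv P Q) ^ 2 /
      ((1 + chiSqDiv Q P) * (1 + chiSqDiv P Q) ^ 2 - 1)

set_option maxHeartbeats 1000000 in
/-- **Refined chi-square upper bound on KL divergence (Sason–Verdú).** For mutually absolutely
continuous probability measures `P`, `Q` with finite chi-square divergences in both directions,
`D(P‖Q) ≤ log(1 + χ²(P‖Q)) − (3/2)·χ²(P‖Q)² / ((1 + χ²(Q‖P))·(1 + χ²(P‖Q))² − 1)`,
where `D` is measured in nats. -/
theorem klDiv_le_chiSqUP {X : Type*} [MeasurableSpace X]
    (P Q : Measure X) [IsProbabilityMeasure P] [IsProbabilityMeasure Q]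
    (hPQ : P ≪ Q) (hQP : Q ≪ P)
    (hchiPQ : Integrable (fun x => ((P.rnDeriv Q x).toReal) ^ 2) Q)
    (hchiQP : Integrable (fun x => ((Q.rnDeriv P x).toReal) ^ 2) P) :
    klDiv P Q ≤ chiSqUP P Q := by
  set r : X → ℝ := fun x => (P.rnDeriv Q x).toReal with hr_def
  have hrm : Measurable r := (Measure.measurable_rnDeriv P Q).ennreal_toReal
  have hchi' : Integrable (fun x => r x ^ 2) Q := hchiPQ
  have hpos_P : ∀ᵐ x ∂P, 0 < r x := by
    filter_upwards [Measure.rnDeriv_pos hPQ, hPQ.ae_le (Measure.rnDeriv_ne_top P Q)]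
      with x h1 h2
    exact ENNReal.toReal_pos h1.ne' h2
  have hpos_Q : ∀ᵐ x ∂Q, 0 < r x := hQP.ae_le hpos_P
  obtain ⟨s, hs_def⟩ : ∃ s : ℝ, s = ∫ x, r x ^ 2 ∂Q := ⟨_, rfl⟩
  have hInt_rQ : Integrable r Q := Measure.integrable_toReal_rnDeriv
  have hrQ1 : ∫ x, r x ∂Q = 1 := by
    rw [hr_def, Measure.integral_toReal_rnDeriv hPQ]; simp
  have hs1 : (1:ℝ) ≤ s := by
    have h0 : 0 ≤ ∫ x, (r x - 1) ^ 2 ∂Q := integral_nonneg fun x => sq_nonneg _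
    have hexp : ∫ x, (r x - 1) ^ 2 ∂Q = s - 2 * 1 + 1 := by
      calc ∫ x, (r x - 1) ^ 2 ∂Q = ∫ x, (r x ^ 2 - 2 * r x) + 1 ∂Q := by
            congr 1; funext x; ring
        _ = (∫ x, (r x ^ 2 - 2 * r x) ∂Q) + ∫ _x, (1:ℝ) ∂Q :=
            integral_add (hchi'.sub (hInt_rQ.const_mul 2)) (integrable_const 1)
        _ = ((∫ x, r x ^ 2 ∂Q) - ∫ x, 2 * r x ∂Q) + ∫ _x, (1:ℝ) ∂Q := by
            rw [integral_sub hchi' (hInt_rQ.const_mul 2)]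
        _ = s - 2 * 1 + 1 := by rw [integral_const_mul, hrQ1]; simp [hs_def]
    linarith
  have hs0 : (0:ℝ) < s := lt_of_lt_of_le one_pos hs1
  -- ∫ r dP = s
  have hsP : ∫ x, r x ∂P = s := by
    have h := integral_rnDeriv_smul (μ := P) (ν := Q) hPQ (f := r)
    rw [← h, hs_def]
    refine integral_congr_ae (Filter.Eventually.of_forall fun x => ?_)
    show (P.rnDeriv Q x).toReal • r x = r x ^ 2
    rw [smul_eq_mul, pow_two]
  -- ∫ r⁻¹ dP = 1
  have hwP : ∫ x, (r x)⁻¹ ∂P = 1 := by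
    have h := integral_rnDeriv_smul (μ := P) (ν := Q) hPQ (f := fun x => (r x)⁻¹)
    rw [← h]
    have heq : ∀ᵐ x ∂Q, (P.rnDeriv Q x).toReal • (r x)⁻¹ = (1:ℝ) := by
      filter_upwards [hpos_Q] with x hx
      rw [smul_eq_mul]
      exact mul_inv_cancel₀ hx.ne'
    rw [integral_congr_ae heq]
    simp
  -- inverse rnDeriv identification
  have h_inv : (fun x => (Q.rnDeriv P x).toReal) =ᵐ[P] fun x => (r x)⁻¹ := by
    filter_upwards [Measure.inv_rnDeriv hPQ] with x hx
    rw [← hx, Pi.inv_apply, ENNReal.toReal_inv]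
  have hInt_w2 : Integrable (fun x => ((r x)⁻¹) ^ 2) P := by
    refine hchiQP.congr ?_
    filter_upwards [h_inv] with x hx
    rw [hx]
  obtain ⟨T, hT_def⟩ : ∃ T : ℝ, T = ∫ x, ((r x)⁻¹) ^ 2 ∂P := ⟨_, rfl⟩
  have hTχ : T = 1 + chiSqDiv Q P := by
    have : ∫ x, ((Q.rnDeriv P x).toReal) ^ 2 ∂P = T := by
      rw [hT_def]
      refine integral_congr_ae ?_
      filter_upwards [h_inv] with x hx
      rw [hx]
    rw [chiSqDiv, this]; ring
  have hInt_w : Integrable (fun x => (r x)⁻¹) P := by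
    refine ((integrable_const (1:ℝ)).add hInt_w2).mono' hrm.inv.aestronglyMeasurable ?_
    filter_upwards [hpos_P] with x hx
    have h0 : 0 < (r x)⁻¹ := inv_pos.mpr hx
    simp only [Pi.add_apply]
    rw [Real.norm_eq_abs, abs_of_pos h0]
    nlinarith [sq_nonneg ((r x)⁻¹ - 1)]
  have hT1 : (1:ℝ) ≤ T := by
    have h0 : 0 ≤ ∫ x, ((r x)⁻¹ - 1) ^ 2 ∂P := integral_nonneg fun x => sq_nonneg _
    have hexp : ∫ x, ((r x)⁻¹ - 1) ^ 2 ∂P = T - 2 * 1 + 1 := by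
      calc ∫ x, ((r x)⁻¹ - 1) ^ 2 ∂P = ∫ x, (((r x)⁻¹) ^ 2 - 2 * (r x)⁻¹) + 1 ∂P := by
            congr 1; funext x; ring
        _ = (∫ x, (((r x)⁻¹) ^ 2 - 2 * (r x)⁻¹) ∂P) + ∫ _x, (1:ℝ) ∂P :=
            integral_add (hInt_w2.sub (hInt_w.const_mul 2)) (integrable_const 1)
        _ = ((∫ x, ((r x)⁻¹) ^ 2 ∂P) - ∫ x, 2 * (r x)⁻¹ ∂P) + ∫ _x, (1:ℝ) ∂P := by
            rw [integral_sub hInt_w2 (hInt_w.const_mul 2)]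
        _ = T - 2 * 1 + 1 := by rw [integral_const_mul, hwP]; simp [hT_def]
    linarith
  have hInt_rP : Integrable r P := by
    refine (integrable_rnDeriv_smul_iff hPQ).mp ?_
    refine hchi'.congr (Filter.Eventually.of_forall fun x => ?_)
    show r x ^ 2 = (P.rnDeriv Q x).toReal • r x
    rw [smul_eq_mul, pow_two]
  have hInt_log : Integrable (fun x => Real.log (r x)) P := by
    refine (hInt_rP.add hInt_w).mono' (Real.measurable_log.comp hrm).aestronglyMeasurable ?_
    filter_upwards [hpos_P] with x hx
    have h1 := Real.log_le_sub_one_of_pos hx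
    have h2 := log_ge_one_sub_inv hx
    have h3 : 0 < (r x)⁻¹ := inv_pos.mpr hx
    simp only [Pi.add_apply]
    rw [Real.norm_eq_abs, abs_le]
    constructor <;> nlinarith
  -- the integrand g = f(Y)
  obtain ⟨g, hg_def⟩ : ∃ g : X → ℝ, g = fun x => r x / s - 1 + Real.log s - Real.log (r x) :=
    ⟨_, rfl⟩
  have hInt_g : Integrable g P := by
    rw [hg_def]
    exact (((hInt_rP.div_const s).sub (integrable_const 1)).add
      (integrable_const (Real.log s))).sub hInt_log
  have hFg : ∫ x, g x ∂P = Real.log s - ∫ x, Real.log (r x) ∂P := by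
    rw [hg_def]
    calc ∫ x, (r x / s - 1 + Real.log s - Real.log (r x)) ∂P
        = (∫ x, (r x / s - 1 + Real.log s) ∂P) - ∫ x, Real.log (r x) ∂P :=
          integral_sub (((hInt_rP.div_const s).sub (integrable_const 1)).add
            (integrable_const (Real.log s))) hInt_log
      _ = ((∫ x, (r x / s - 1) ∂P) + ∫ _x, Real.log s ∂P) - ∫ x, Real.log (r x) ∂P := by
          have := integral_add ((hInt_rP.div_const s).sub (integrable_const 1))
            (integrable_const (Real.log s)) (μ := P)
          rw [show (∫ x, (r x / s - 1 + Real.log s) ∂P)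
            = (∫ x, (r x / s - 1) ∂P) + ∫ _x, Real.log s ∂P from this]
      _ = (((∫ x, r x / s ∂P) - ∫ _x, (1:ℝ) ∂P) + ∫ _x, Real.log s ∂P)
            - ∫ x, Real.log (r x) ∂P := by
          rw [show (∫ x, (r x / s - 1) ∂P) = (∫ x, r x / s ∂P) - ∫ _x, (1:ℝ) ∂P from
            integral_sub (hInt_rP.div_const s) (integrable_const 1)]
      _ = Real.log s - ∫ x, Real.log (r x) ∂P := by
          rw [integral_div, hsP, div_self hs0.ne']; simp
  -- the function c with ∫ c ∂P = s - 1
  have hInt_c : Integrable (fun x => s * (r x)⁻¹ + r x / s - 2) P :=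
    ((hInt_w.const_mul s).add (hInt_rP.div_const s)).sub (integrable_const 2)
  have hC : ∫ x, (s * (r x)⁻¹ + r x / s - 2) ∂P = s - 1 := by
    calc ∫ x, (s * (r x)⁻¹ + r x / s - 2) ∂P
        = (∫ x, (s * (r x)⁻¹ + r x / s) ∂P) - ∫ _x, (2:ℝ) ∂P :=
          integral_sub ((hInt_w.const_mul s).add (hInt_rP.div_const s)) (integrable_const 2)
      _ = ((∫ x, s * (r x)⁻¹ ∂P) + ∫ x, r x / s ∂P) - ∫ _x, (2:ℝ) ∂P := by
          rw [show (∫ x, (s * (r x)⁻¹ + r x / s) ∂P)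
            = (∫ x, s * (r x)⁻¹ ∂P) + ∫ x, r x / s ∂P from
            integral_add (hInt_w.const_mul s) (hInt_rP.div_const s)]
      _ = s - 1 := by
          rw [integral_const_mul, hwP, integral_div, hsP, div_self hs0.ne']
          simp only [mul_one, integral_const, measure_univ, probReal_univ, ENNReal.toReal_one, smul_eq_mul,
            one_mul]
          ring
  -- the function b with ∫ b ∂P = s ^ 2 * T - 1
  have hInt_b : Integrable (fun x => s ^ 2 * ((r x)⁻¹) ^ 2 + 2 * (r x / s) - 3) P :=
    ((hInt_w2.const_mul (s ^ 2)).add ((hInt_rP.div_const s).const_mul 2)).sub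
      (integrable_const 3)
  have hB : ∫ x, (s ^ 2 * ((r x)⁻¹) ^ 2 + 2 * (r x / s) - 3) ∂P = s ^ 2 * T - 1 := by
    calc ∫ x, (s ^ 2 * ((r x)⁻¹) ^ 2 + 2 * (r x / s) - 3) ∂P
        = (∫ x, (s ^ 2 * ((r x)⁻¹) ^ 2 + 2 * (r x / s)) ∂P) - ∫ _x, (3:ℝ) ∂P :=
          integral_sub ((hInt_w2.const_mul (s ^ 2)).add ((hInt_rP.div_const s).const_mul 2))
            (integrable_const 3)
      _ = ((∫ x, s ^ 2 * ((r x)⁻¹) ^ 2 ∂P) + ∫ x, 2 * (r x / s) ∂P) - ∫ _x, (3:ℝ) ∂P := by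
          rw [show (∫ x, (s ^ 2 * ((r x)⁻¹) ^ 2 + 2 * (r x / s)) ∂P)
            = (∫ x, s ^ 2 * ((r x)⁻¹) ^ 2 ∂P) + ∫ x, 2 * (r x / s) ∂P from
            integral_add (hInt_w2.const_mul (s ^ 2)) ((hInt_rP.div_const s).const_mul 2)]
      _ = s ^ 2 * T - 1 := by
          rw [integral_const_mul, integral_const_mul, integral_div, hsP, div_self hs0.ne',
            ← hT_def]
          simp only [integral_const, measure_univ, probReal_univ, ENNReal.toReal_one, smul_eq_mul, one_mul,
            mul_one]
          ring
  -- the function a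
  obtain ⟨a, ha_def⟩ : ∃ a : X → ℝ,
      a = fun x => (s * (r x)⁻¹ - 1) ^ 2 / ((s * (r x)⁻¹) * (s * (r x)⁻¹ + 2)) := ⟨_, rfl⟩
  have ham : Measurable a := by
    rw [ha_def]
    exact (((hrm.inv.const_mul s).sub_const 1).pow_const 2).div
      ((hrm.inv.const_mul s).mul ((hrm.inv.const_mul s).add_const 2))
  have key_ae : ∀ᵐ x ∂P, 0 ≤ a x ∧ a x ≤ 2 / 3 * g x := by
    filter_upwards [hpos_P] with x hx
    have hy : 0 < s * (r x)⁻¹ := mul_pos hs0 (inv_pos.mpr hx)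
    have h1 : (s * (r x)⁻¹)⁻¹ = r x / s := by
      rw [mul_inv, inv_inv, div_eq_mul_inv, mul_comm]
    have h2 : Real.log (s * (r x)⁻¹) = Real.log s - Real.log (r x) := by
      rw [Real.log_mul hs0.ne' (inv_ne_zero hx.ne'), Real.log_inv]; ring
    constructor
    · simp only [ha_def]
      exact div_nonneg (sq_nonneg _) (mul_pos hy (by linarith)).le
    · have hkp := key_pointwise hy
      rw [h1, h2] at hkp
      simp only [ha_def, hg_def]
      linarith [hkp]
  have hInt_a : Integrable a P := by
    refine (hInt_g.const_mul (2 / 3)).mono' ham.aestronglyMeasurable ?_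
    filter_upwards [key_ae] with x hx
    rw [Real.norm_eq_abs, abs_of_nonneg hx.1]
    exact hx.2
  have hA_nonneg : 0 ≤ ∫ x, a x ∂P :=
    integral_nonneg_of_ae (key_ae.mono fun x h => h.1)
  have hG_nonneg : 0 ≤ ∫ x, g x ∂P := by
    refine integral_nonneg_of_ae ?_
    filter_upwards [key_ae] with x hx
    simp only [Pi.zero_apply]
    linarith [hx.1, hx.2]
  have hA_le : ∫ x, a x ∂P ≤ 2 / 3 * ∫ x, g x ∂P := by
    calc ∫ x, a x ∂P ≤ ∫ x, 2 / 3 * g x ∂P :=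
        integral_mono_ae hInt_a (hInt_g.const_mul (2 / 3)) (key_ae.mono fun x h => h.2)
      _ = 2 / 3 * ∫ x, g x ∂P := by rw [integral_const_mul]
  -- the quadratic is nonnegative
  have hquad : ∀ t : ℝ, 0 ≤ (∫ x, a x ∂P) * t ^ 2 + (-(2 * (s - 1))) * t + (s ^ 2 * T - 1) := by
    intro t
    have hae : ∀ᵐ x ∂P, 0 ≤ t ^ 2 * a x - 2 * t * (s * (r x)⁻¹ + r x / s - 2)
        + (s ^ 2 * ((r x)⁻¹) ^ 2 + 2 * (r x / s) - 3) := by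
      filter_upwards [hpos_P] with x hx
      have hy : 0 < s * (r x)⁻¹ := mul_pos hs0 (inv_pos.mpr hx)
      have hr0 : r x ≠ 0 := hx.ne'
      have hy2 : (0:ℝ) < s * (r x)⁻¹ + 2 := by linarith
      have hkey : t ^ 2 * a x - 2 * t * (s * (r x)⁻¹ + r x / s - 2)
          + (s ^ 2 * ((r x)⁻¹) ^ 2 + 2 * (r x / s) - 3)
          = ((s * (r x)⁻¹ - 1) * (t - (s * (r x)⁻¹ + 2))) ^ 2
            / ((s * (r x)⁻¹) * (s * (r x)⁻¹ + 2)) := by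
        simp only [ha_def]
        field_simp
        ring
      rw [hkey]
      exact div_nonneg (sq_nonneg _) (mul_pos hy hy2).le
    have h0 := integral_nonneg_of_ae hae
    have hsplit : ∫ x, (t ^ 2 * a x - 2 * t * (s * (r x)⁻¹ + r x / s - 2)
        + (s ^ 2 * ((r x)⁻¹) ^ 2 + 2 * (r x / s) - 3)) ∂P
        = t ^ 2 * (∫ x, a x ∂P) - 2 * t * (s - 1) + (s ^ 2 * T - 1) := by
      calc ∫ x, (t ^ 2 * a x - 2 * t * (s * (r x)⁻¹ + r x / s - 2)
            + (s ^ 2 * ((r x)⁻¹) ^ 2 + 2 * (r x / s) - 3)) ∂P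
          = (∫ x, (t ^ 2 * a x - 2 * t * (s * (r x)⁻¹ + r x / s - 2)) ∂P)
            + ∫ x, (s ^ 2 * ((r x)⁻¹) ^ 2 + 2 * (r x / s) - 3) ∂P :=
            integral_add ((hInt_a.const_mul (t ^ 2)).sub (hInt_c.const_mul (2 * t))) hInt_b
        _ = ((∫ x, t ^ 2 * a x ∂P) - ∫ x, 2 * t * (s * (r x)⁻¹ + r x / s - 2) ∂P)
            + ∫ x, (s ^ 2 * ((r x)⁻¹) ^ 2 + 2 * (r x / s) - 3) ∂P := by
            rw [show (∫ x, (t ^ 2 * a x - 2 * t * (s * (r x)⁻¹ + r x / s - 2)) ∂P)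
              = (∫ x, t ^ 2 * a x ∂P) - ∫ x, 2 * t * (s * (r x)⁻¹ + r x / s - 2) ∂P from
              integral_sub (hInt_a.const_mul (t ^ 2)) (hInt_c.const_mul (2 * t))]
        _ = t ^ 2 * (∫ x, a x ∂P) - 2 * t * (s - 1) + (s ^ 2 * T - 1) := by
            rw [integral_const_mul, integral_const_mul, hC, hB]
    rw [hsplit] at h0
    linarith
  have hquad' : ∀ t : ℝ,
      0 ≤ (∫ x, a x ∂P) * (t * t) + (-(2 * (s - 1))) * t + (s ^ 2 * T - 1) := by
    intro t
    have h := hquad t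
    rw [pow_two] at h
    exact h
  have hdisc := discrim_le_zero hquad'
  simp only [discrim] at hdisc
  -- conclude the main bound
  have hmain : 3 / 2 * (s - 1) ^ 2 / (s ^ 2 * T - 1) ≤ ∫ x, g x ∂P := by
    have hBnn : (0:ℝ) ≤ s ^ 2 * T - 1 := by nlinarith
    rcases eq_or_lt_of_le hBnn with hB0 | hBpos
    · rw [← hB0, div_zero]
      exact hG_nonneg
    · rw [div_le_iff₀ hBpos]
      have hmul : (∫ x, a x ∂P) * (s ^ 2 * T - 1)
          ≤ (2 / 3 * ∫ x, g x ∂P) * (s ^ 2 * T - 1) :=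
        mul_le_mul_of_nonneg_right hA_le hBnn
      nlinarith [hdisc, hmul]
  -- assemble
  have hkl : klDiv P Q = ∫ x, Real.log (r x) ∂P := rfl
  have hχPQ : chiSqDiv P Q = s - 1 := by
    show (∫ x, ((P.rnDeriv Q x).toReal) ^ 2 ∂Q) - 1 = s - 1
    rw [hs_def]
  have hUP : chiSqUP P Q = Real.log s - 3 / 2 * (s - 1) ^ 2 / (s ^ 2 * T - 1) := by
    show Real.log (1 + chiSqDiv P Q) - (3 / 2) * (chiSqDiv P Q) ^ 2 /
        ((1 + chiSqDiv Q P) * (1 + chiSqDiv P Q) ^ 2 - 1)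
      = Real.log s - 3 / 2 * (s - 1) ^ 2 / (s ^ 2 * T - 1)
    rw [hχPQ, ← hTχ, show (1:ℝ) + (s - 1) = s from by ring,
      show T * s ^ 2 - 1 = s ^ 2 * T - 1 from by ring]
  rw [hUP, hkl]
  have hD : ∫ x, Real.log (r x) ∂P = Real.log s - ∫ x, g x ∂P := by linarith [hFg]
  rw [hD]
  linarith [hmain]
end
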